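/- Let p_S(x,y,z) = p_S(x,y)p(z|x) and p_T(x,y,z) = p_T(x,y)p(z|x) share the representation kernel p(z|x). Assume: (i) I_S(z;y) = I_S(x;y); (ii) p_S(y|x) = E_{p(z|x)}[p_S(y|z)] for all x,y; (iii) p_T(x,y)/p_S(x,y) ≤ N < ∞. Then E_{p_T(z)}[KL(p_T(y|z)‖p_S(y|z))] ≤ E_{p_T(x)}[KL(p_T(y|x)‖p_S(y|x))]. -/

import Mathlib

open MeasureTheory Real Set
open scoped ENNReal NNReal

section Helpers

variable {α : Type*} [MeasurableSpace α]

lemma integral_le_toReal_lintegral (μ : Measure α) (f : α → ℝ) (hf : Integrable f μ) :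
    ∫ x, f x ∂μ ≤ (∫⁻ x, ENNReal.ofReal (f x) ∂μ).toReal := by
  have h1 : ∫ x, f x ∂μ ≤ ∫ x, max (f x) 0 ∂μ :=
    integral_mono hf hf.pos_part fun x => le_max_left _ _
  have h2 : ∫ x, max (f x) 0 ∂μ
      = (∫⁻ x, ENNReal.ofReal (max (f x) 0) ∂μ).toReal :=
    integral_eq_lintegral_of_nonneg_ae (Filter.Eventually.of_forall fun x => le_max_right _ _)
      (hf.aestronglyMeasurable.sup aestronglyMeasurable_const)
  have h3 : ∀ x, ENNReal.ofReal (max (f x) 0) = ENNReal.ofReal (f x) := fun x => by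
    rcases le_total 0 (f x) with h | h
    · rw [max_eq_left h]
    · rw [max_eq_right h, ENNReal.ofReal_of_nonpos h, ENNReal.ofReal_zero]
  rw [lintegral_congr h3] at h2
  linarith

lemma integrable_of_integral_ne_zero {μ : Measure α} {f : α → ℝ}
    (h : ∫ x, f x ∂μ ≠ 0) : Integrable f μ := by
  by_contra hc
  exact h (integral_undef hc)

end Helpers

noncomputable def phiFn (t : ℝ) : ℝ := t - Real.log (1 + t)

lemma phiFn_nonneg {t : ℝ} (ht : 0 ≤ t) : 0 ≤ phiFn t := by
  have h := Real.log_le_sub_one_of_pos (x := 1 + t) (by linarith)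
  simp only [phiFn]; linarith

lemma phiFn_le {t : ℝ} (ht : 0 ≤ t) : phiFn t ≤ t := by
  have h := Real.log_nonneg (x := 1 + t) (by linarith)
  simp only [phiFn]; linarith

lemma phiFn_continuousOn : ContinuousOn phiFn (Ici (0:ℝ)) := by
  intro t ht
  have h1 : (1 : ℝ) + t ≠ 0 := by simp at ht; intro h; linarith
  exact (continuousAt_id.sub ((Real.continuousAt_log h1).comp
    (continuousAt_const.add continuousAt_id))).continuousWithinAt

lemma phiFn_measurable : Measurable phiFn :=
  measurable_id.sub ((Real.measurable_log).comp (measurable_const.add measurable_id))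

lemma phiFn_hasDerivAt {t : ℝ} (ht : -1 < t) : HasDerivAt phiFn (1 - (1+t)⁻¹) t := by
  have h1 : (1:ℝ) + t ≠ 0 := by intro h; linarith
  have hlog : HasDerivAt (fun s : ℝ => Real.log (1 + s)) ((1+t)⁻¹ * 1) t := by
    have hin : HasDerivAt (fun s : ℝ => 1 + s) 1 t := by
      exact (hasDerivAt_id' t).const_add 1
    exact (Real.hasDerivAt_log h1).comp t hin
  have h2 := (hasDerivAt_id' t).sub hlog
  rw [mul_one] at h2
  exact h2

lemma phiFn_strictConvexOn : StrictConvexOn ℝ (Ici (0:ℝ)) phiFn := by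
  apply strictConvexOn_of_deriv2_pos (convex_Ici 0) phiFn_continuousOn
  intro x hx
  rw [interior_Ici] at hx
  have hx' : (0:ℝ) < x := hx
  have hd : ∀ s ∈ Ioi (-1:ℝ), deriv phiFn s = 1 - (1+s)⁻¹ := fun s hs =>
    (phiFn_hasDerivAt hs).deriv
  have hev : deriv phiFn =ᶠ[nhds x] fun s => 1 - (1+s)⁻¹ := by
    filter_upwards [Ioi_mem_nhds (show (-1:ℝ) < x by linarith)] with s hs using hd s hs
  have h1 : (1:ℝ) + x ≠ 0 := by positivity
  have hder : HasDerivAt (fun s : ℝ => 1 - (1+s)⁻¹) (0 - (-1 / (1+x)^2)) x := by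
    have : HasDerivAt (fun s : ℝ => (1+s)⁻¹) (-((1:ℝ)) / (1+x)^2) x := by
      have hin : HasDerivAt (fun s : ℝ => 1 + s) 1 x := by
        exact (hasDerivAt_id' x).const_add 1
      exact hin.inv h1
    exact (hasDerivAt_const x (1:ℝ)).sub this
  have : deriv (deriv phiFn) x = 0 - (-1 / (1+x)^2) := by
    rw [Filter.EventuallyEq.deriv_eq hev]; exact hder.deriv
  have h2 : deriv^[2] phiFn x = deriv (deriv phiFn) x := rfl
  rw [h2, this]
  have h3 : (0:ℝ) - -1/(1+x)^2 = 1/(1+x)^2 := by ring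
  rw [h3]; positivity

-- pointwise nonnegativity of the KL integrand a*log(a/b) + b - a
lemma jensen_phi {α : Type*} [MeasurableSpace α] (μ : Measure α) [SigmaFinite μ]
    (w f : α → ℝ) (hwm : Measurable w) (hfm : Measurable f)
    (hw0 : ∀ x, 0 ≤ w x) (hf0 : ∀ x, 0 ≤ f x)
    (hwi : Integrable w μ) (hw1 : ∫ x, w x ∂μ = 1)
    (hwf : Integrable (fun x => w x * f x) μ) :
    phiFn (∫ x, w x * f x ∂μ) ≤ ∫ x, w x * phiFn (f x) ∂μ ∧
    (∫ x, w x * phiFn (f x) ∂μ ≤ phiFn (∫ x, w x * f x ∂μ) →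
      ∀ᵐ x ∂μ, w x ≠ 0 → f x = ∫ x, w x * f x ∂μ) := by
  set d : α → ℝ≥0∞ := fun x => ENNReal.ofReal (w x) with hd
  have hdm : Measurable d := hwm.ennreal_ofReal
  set ν := μ.withDensity d with hν
  have hmass : ν univ = 1 := by
    rw [hν, withDensity_apply _ MeasurableSet.univ, setLIntegral_univ,
      ← ofReal_integral_eq_lintegral_ofReal hwi (Filter.Eventually.of_forall hw0), hw1,
      ENNReal.ofReal_one]
  haveI hprob : IsProbabilityMeasure ν := ⟨hmass⟩
  have hwd : μ.withDensity (fun x => ((w x).toNNReal : ℝ≥0∞)) = ν := rfl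
  have hInt : ∀ g : α → ℝ, (Integrable g ν ↔ Integrable (fun x => w x * g x) μ) := by
    intro g
    rw [hν, integrable_withDensity_iff hdm (Filter.Eventually.of_forall fun x => by
      simp [hd, ENNReal.ofReal_lt_top])]
    constructor <;> intro h <;> [skip; skip] <;>
      · refine h.congr (Filter.Eventually.of_forall fun x => ?_)
        simp [hd, ENNReal.toReal_ofReal (hw0 x), mul_comm]
  have hIntEq : ∀ g : α → ℝ, ∫ x, g x ∂ν = ∫ x, w x * g x ∂μ := by
    intro g
    rw [← hwd, integral_withDensity_eq_integral_smul (hwm.real_toNNReal) g]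
    refine integral_congr_ae (Filter.Eventually.of_forall fun x => ?_)
    simp [NNReal.smul_def, Real.coe_toNNReal _ (hw0 x)]
  have hfν : Integrable f ν := (hInt f).mpr hwf
  have hwpf : Integrable (fun x => w x * phiFn (f x)) μ := by
    refine hwf.mono' (hwm.mul (phiFn_measurable.comp hfm)).aestronglyMeasurable
      (Filter.Eventually.of_forall fun x => ?_)
    rw [Real.norm_eq_abs, abs_mul, abs_of_nonneg (hw0 x), abs_of_nonneg (phiFn_nonneg (hf0 x))]
    exact mul_le_mul_of_nonneg_left (phiFn_le (hf0 x)) (hw0 x)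
  have hpfν : Integrable (phiFn ∘ f) ν := (hInt _).mpr hwpf
  have hmem : ∀ᵐ x ∂ν, f x ∈ Ici (0:ℝ) := Filter.Eventually.of_forall fun x => hf0 x
  have havg1 : ⨍ x, f x ∂ν = ∫ x, w x * f x ∂μ := by
    rw [average_eq_integral, hIntEq]
  have havg2 : ⨍ x, phiFn (f x) ∂ν = ∫ x, w x * phiFn (f x) ∂μ := by
    rw [average_eq_integral, hIntEq]
  constructor
  · have := phiFn_strictConvexOn.convexOn.map_average_le phiFn_continuousOn isClosed_Ici
      hmem hfν hpfν
    rwa [havg1, havg2] at this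
  · intro hle
    rcases phiFn_strictConvexOn.ae_eq_const_or_map_average_lt phiFn_continuousOn isClosed_Ici
      hmem hfν hpfν with heq | hlt
    · have := (ae_withDensity_iff hdm).mp heq
      filter_upwards [this] with x hx hwx
      have : d x ≠ 0 := by
        simp only [hd, ne_eq, ENNReal.ofReal_eq_zero, not_le]
        exact lt_of_le_of_ne (hw0 x) (Ne.symm hwx)
      simpa [havg1] using hx this
    · rw [havg1, havg2] at hlt; linarith

lemma klterm_nonneg {a b : ℝ} (ha : 0 ≤ a) (hb : 0 ≤ b) (hab : b = 0 → a = 0) :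
    0 ≤ a * Real.log (a / b) + (b - a) := by
  rcases eq_or_lt_of_le hb with hb0 | hbpos
  · have ha0 : a = 0 := hab hb0.symm
    simp [ha0, ← hb0]
  rcases eq_or_lt_of_le ha with ha0 | hapos
  · simp [← ha0]; linarith
  · have h := Real.log_le_sub_one_of_pos (x := b / a) (by positivity)
    have hlog : Real.log (a / b) = - Real.log (b / a) := by
      rw [← Real.log_inv]; congr 1; field_simp
    rw [hlog]
    have h2 : a * (b / a - 1) ≥ a * Real.log (b / a) :=
      mul_le_mul_of_nonneg_left h (le_of_lt hapos)
    have h3 : a * (b / a - 1) = b - a := by field_simp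
    nlinarith

lemma wd_integral {α : Type*} [MeasurableSpace α] (μ : Measure α) (w : α → ℝ)
    (hwm : Measurable w) (hw0 : ∀ x, 0 ≤ w x) (g : α → ℝ) :
    ∫ x, g x ∂(μ.withDensity fun x => ENNReal.ofReal (w x)) = ∫ x, w x * g x ∂μ := by
  have hwd : μ.withDensity (fun x => ((w x).toNNReal : ℝ≥0∞))
      = μ.withDensity fun x => ENNReal.ofReal (w x) := rfl
  rw [← hwd, integral_withDensity_eq_integral_smul hwm.real_toNNReal g]
  exact integral_congr_ae (Filter.Eventually.of_forall fun x => by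
    simp [NNReal.smul_def, Real.coe_toNNReal _ (hw0 x)])

lemma wd_integrable {α : Type*} [MeasurableSpace α] (μ : Measure α) (w : α → ℝ)
    (hwm : Measurable w) (hw0 : ∀ x, 0 ≤ w x) (g : α → ℝ) :
    Integrable g (μ.withDensity fun x => ENNReal.ofReal (w x))
      ↔ Integrable (fun x => w x * g x) μ := by
  rw [integrable_withDensity_iff hwm.ennreal_ofReal
    (Filter.Eventually.of_forall fun x => ENNReal.ofReal_lt_top)]
  constructor <;> intro h <;>
    · refine h.congr (Filter.Eventually.of_forall fun x => ?_)
      simp [ENNReal.toReal_ofReal (hw0 x), mul_comm]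

lemma wd_mass {α : Type*} [MeasurableSpace α] (μ : Measure α) (w : α → ℝ)
    (hw0 : ∀ x, 0 ≤ w x) (hwi : Integrable w μ) :
    (μ.withDensity fun x => ENNReal.ofReal (w x)) univ = ENNReal.ofReal (∫ x, w x ∂μ) := by
  rw [withDensity_apply _ MeasurableSet.univ, setLIntegral_univ,
    ← ofReal_integral_eq_lintegral_ofReal hwi (Filter.Eventually.of_forall hw0)]

lemma logsum {α : Type*} [MeasurableSpace α] (μ : Measure α) [SigmaFinite μ] (a b : α → ℝ)
    (ham : Measurable a) (hbm : Measurable b) (ha0 : ∀ x, 0 ≤ a x) (hb0 : ∀ x, 0 ≤ b x)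
    (hai : Integrable a μ) (hbi : Integrable b μ) (hab : ∀ x, b x = 0 → a x = 0) :
    ENNReal.ofReal ((∫ x, a x ∂μ) * Real.log ((∫ x, a x ∂μ) / (∫ x, b x ∂μ))
        + ((∫ x, b x ∂μ) - ∫ x, a x ∂μ))
      ≤ ∫⁻ x, ENNReal.ofReal (a x * Real.log (a x / b x) + (b x - a x)) ∂μ := by
  set Ia := ∫ x, a x ∂μ with hIa
  set Ib := ∫ x, b x ∂μ with hIb
  by_cases hIb0 : Ib = 0
  · have hb00 : b =ᵐ[μ] 0 := (integral_eq_zero_iff_of_nonneg hb0 hbi).mp hIb0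
    have ha00 : a =ᵐ[μ] 0 := by filter_upwards [hb00] with x hx using hab x hx
    have hIa0 : Ia = 0 := by rw [hIa, integral_congr_ae ha00]; simp
    simp [hIa0, hIb0]
  have hIbpos : 0 < Ib := lt_of_le_of_ne (integral_nonneg hb0) (Ne.symm hIb0)
  have hF0 : ∀ x, 0 ≤ a x * Real.log (a x / b x) + (b x - a x) :=
    fun x => klterm_nonneg (ha0 x) (hb0 x) (hab x)
  have hFm : Measurable fun x => a x * Real.log (a x / b x) + (b x - a x) :=
    (ham.mul (Real.measurable_log.comp (ham.div hbm))).add (hbm.sub ham)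
  rcases eq_or_ne (∫⁻ x, ENNReal.ofReal (a x * Real.log (a x / b x) + (b x - a x)) ∂μ) ∞
    with htop | hfin
  · rw [htop]; exact le_top
  have hFi : Integrable (fun x => a x * Real.log (a x / b x) + (b x - a x)) μ := by
    refine ⟨hFm.aestronglyMeasurable, ?_⟩
    rw [hasFiniteIntegral_iff_ofReal (Filter.Eventually.of_forall hF0)]
    exact lt_top_iff_ne_top.mpr hfin
  have hali : Integrable (fun x => a x * Real.log (a x / b x)) μ := by
    have hba2 : Integrable (fun x => b x - a x) μ := hbi.sub hai
    have := hFi.sub hba2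
    refine this.congr (Filter.Eventually.of_forall fun x => ?_)
    simp only [Pi.sub_apply]; ring
  set ν := μ.withDensity fun x => ENNReal.ofReal (b x) with hν
  have hmass : ν univ = ENNReal.ofReal Ib := wd_mass μ b hb0 hbi
  haveI : IsFiniteMeasure ν := ⟨by rw [hmass]; exact ENNReal.ofReal_lt_top⟩
  haveI : NeZero ν := by
    refine ⟨fun h => ?_⟩
    rw [← Measure.measure_univ_eq_zero] at h
    rw [hmass, ENNReal.ofReal_eq_zero] at h
    linarith
  set h : α → ℝ := fun x => a x / b x with hh
  have hba : (fun x => b x * h x) = a := funext fun x => by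
    rcases eq_or_ne (b x) 0 with h0 | h0
    · simp [hh, h0, hab x h0]
    · show b x * (a x / b x) = a x
      field_simp
  have hhint : Integrable h ν := by
    rw [wd_integrable μ b hbm hb0, hba]; exact hai
  have hbphi : (fun x => b x * (h x * Real.log (h x)))
      = fun x => a x * Real.log (a x / b x) := funext fun x => by
    rcases eq_or_ne (b x) 0 with h0 | h0
    · simp [hh, h0, hab x h0]
    · have : b x * (a x / b x * Real.log (a x / b x)) = a x * Real.log (a x / b x) := by
        field_simp
      simpa [hh] using this
  have hphint : Integrable ((fun t => t * Real.log t) ∘ h) ν := by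
    rw [wd_integrable μ b hbm hb0]
    simpa [Function.comp, hbphi] using hali
  have hmem : ∀ᵐ x ∂ν, h x ∈ Ici (0:ℝ) :=
    Filter.Eventually.of_forall fun x => div_nonneg (ha0 x) (hb0 x)
  have hjen := Real.convexOn_mul_log.map_average_le Real.continuous_mul_log.continuousOn
    isClosed_Ici hmem hhint hphint
  have havg1 : ⨍ x, h x ∂ν = Ia / Ib := by
    rw [average_eq, wd_integral μ b hbm hb0, hba, smul_eq_mul, measureReal_def, hmass,
      ENNReal.toReal_ofReal hIbpos.le]
    rw [inv_mul_eq_div]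
  have havg2 : ⨍ x, h x * Real.log (h x) ∂ν
      = (∫ x, a x * Real.log (a x / b x) ∂μ) / Ib := by
    rw [average_eq, wd_integral μ b hbm hb0, hbphi, smul_eq_mul, measureReal_def, hmass,
      ENNReal.toReal_ofReal hIbpos.le, inv_mul_eq_div]
  rw [havg1, havg2] at hjen
  have hkey : Ia * Real.log (Ia / Ib) ≤ ∫ x, a x * Real.log (a x / b x) ∂μ := by
    have := mul_le_mul_of_nonneg_right hjen hIbpos.le
    rw [div_mul_cancel₀ _ (ne_of_gt hIbpos)] at this
    calc Ia * Real.log (Ia / Ib) = Ia / Ib * Real.log (Ia / Ib) * Ib := by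
          field_simp
      _ ≤ _ := this
  have hreal : Ia * Real.log (Ia / Ib) + (Ib - Ia)
      ≤ ∫ x, a x * Real.log (a x / b x) + (b x - a x) ∂μ := by
    have hba2 : Integrable (fun x => b x - a x) μ := hbi.sub hai
    rw [integral_add hali hba2, integral_sub hbi hai]
    linarith
  calc ENNReal.ofReal (Ia * Real.log (Ia / Ib) + (Ib - Ia))
      ≤ ENNReal.ofReal (∫ x, a x * Real.log (a x / b x) + (b x - a x) ∂μ) :=
        ENNReal.ofReal_le_ofReal hreal
    _ = _ := ofReal_integral_eq_lintegral_ofReal hFi (Filter.Eventually.of_forall hF0)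

lemma kernel_facts {X Y Z : Type*} [MeasurableSpace X] [MeasurableSpace Y] [MeasurableSpace Z]
    (μX : Measure X) (μY : Measure Y) (μZ : Measure Z)
    [SigmaFinite μX] [SigmaFinite μY] [SigmaFinite μZ]
    (p : X × Y → ℝ) (k : X → Z → ℝ) (px : X → ℝ) (pzy : Z × Y → ℝ) (pz : Z → ℝ)
    (hpm : Measurable p) (hkm : Measurable fun w : X × Z => k w.1 w.2)
    (hp0 : ∀ w, 0 ≤ p w) (hk0 : ∀ x z, 0 ≤ k x z)
    (hpi : Integrable p (μX.prod μY))
    (hsl : ∀ x, Integrable (fun y => p (x, y)) μY)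
    (hki : ∀ x, Integrable (k x) μZ) (hk1 : ∀ x, ∫ z, k x z ∂μZ = 1)
    (hpx : ∀ x, px x = ∫ y, p (x, y) ∂μY)
    (hpzy : ∀ z y, pzy (z, y) = ∫ x, p (x, y) * k x z ∂μX)
    (hpzsl : ∀ z, Integrable (fun y => pzy (z, y)) μY)
    (hpz : ∀ z, pz z = ∫ y, pzy (z, y) ∂μY) :
    (∀ᵐ w : Z × Y ∂μZ.prod μY, Integrable (fun x => p (x, w.2) * k x w.1) μX ∧
       ENNReal.ofReal (pzy w) = ∫⁻ x, ENNReal.ofReal (p (x, w.2)) * ENNReal.ofReal (k x w.1) ∂μX) ∧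
    (∀ᵐ z ∂μZ, Integrable (fun x => px x * k x z) μX ∧
       pz z = ∫ x, px x * k x z ∂μX ∧
       ENNReal.ofReal (pz z) = ∫⁻ x, ENNReal.ofReal (px x) * ENNReal.ofReal (k x z) ∂μX) := by
  have mkx : ∀ x, Measurable (k x) := fun x => hkm.comp measurable_prodMk_left
  have mkz : ∀ z, Measurable (fun x => k x z) := fun z => hkm.comp measurable_prodMk_right
  have px0 : ∀ x, 0 ≤ px x := fun x => (hpx x) ▸ integral_nonneg fun y => hp0 _
  have pzy0 : ∀ w : Z × Y, 0 ≤ pzy w := fun w => by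
    have := hpzy w.1 w.2
    simp only [Prod.mk.eta] at this
    exact this ▸ integral_nonneg fun x => mul_nonneg (hp0 _) (hk0 _ _)
  have pz0 : ∀ z, 0 ≤ pz z := fun z => (hpz z) ▸ integral_nonneg fun y => pzy0 _
  have mpx : Measurable px := by
    rw [show px = fun x => ∫ y, p (x, y) ∂μY from funext hpx]
    exact (hpm.stronglyMeasurable.integral_prod_right').measurable
  have lk : ∀ x, ∫⁻ z, ENNReal.ofReal (k x z) ∂μZ = 1 := fun x => by
    rw [← ofReal_integral_eq_lintegral_ofReal (hki x)
      (Filter.Eventually.of_forall (hk0 x)), hk1 x, ENNReal.ofReal_one]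
  have lpx : ∀ x, ∫⁻ y, ENNReal.ofReal (p (x, y)) ∂μY = ENNReal.ofReal (px x) := fun x => by
    rw [hpx x, ofReal_integral_eq_lintegral_ofReal (hsl x)
      (Filter.Eventually.of_forall fun y => hp0 _)]
  have lmass : ∫⁻ x, ENNReal.ofReal (px x) ∂μX = ENNReal.ofReal (∫ w, p w ∂μX.prod μY) := by
    rw [ofReal_integral_eq_lintegral_ofReal hpi (Filter.Eventually.of_forall hp0),
      lintegral_prod _ (hpm.ennreal_ofReal.aemeasurable)]
    exact (lintegral_congr fun x => lpx x).symm
  have mg : Measurable fun q : (Z × Y) × X =>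
      ENNReal.ofReal (p (q.2, q.1.2)) * ENNReal.ofReal (k q.2 q.1.1) :=
    ((hpm.comp (measurable_snd.prodMk measurable_fst.snd)).ennreal_ofReal).mul
      ((hkm.comp (measurable_snd.prodMk measurable_fst.fst)).ennreal_ofReal)
  have minner : Measurable fun w : Z × Y =>
      ∫⁻ x, ENNReal.ofReal (p (x, w.2)) * ENNReal.ofReal (k x w.1) ∂μX :=
    mg.lintegral_prod_right'
  have hinner_x : ∀ x, (∫⁻ w : Z × Y, ENNReal.ofReal (p (x, w.2)) * ENNReal.ofReal (k x w.1)
      ∂μZ.prod μY) = ENNReal.ofReal (px x) := by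
    intro x
    have m1 : Measurable fun w : Z × Y =>
        ENNReal.ofReal (p (x, w.2)) * ENNReal.ofReal (k x w.1) :=
      ((hpm.comp (measurable_const.prodMk measurable_snd)).ennreal_ofReal).mul
        (((mkx x).comp measurable_fst).ennreal_ofReal)
    rw [lintegral_prod _ m1.aemeasurable]
    have : ∀ z, ∫⁻ y, ENNReal.ofReal (p (x, y)) * ENNReal.ofReal (k x z) ∂μY
        = ENNReal.ofReal (px x) * ENNReal.ofReal (k x z) := by
      intro z
      rw [lintegral_mul_const _ (show Measurable fun y => ENNReal.ofReal (p (x, y)) from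
        (hpm.comp measurable_prodMk_left).ennreal_ofReal), lpx x]
    rw [lintegral_congr this, lintegral_const_mul _ (mkx x).ennreal_ofReal, lk x, mul_one]
  have hT : ∫⁻ w : Z × Y, (∫⁻ x, ENNReal.ofReal (p (x, w.2)) * ENNReal.ofReal (k x w.1) ∂μX)
      ∂μZ.prod μY = ENNReal.ofReal (∫ w, p w ∂μX.prod μY) := by
    rw [lintegral_lintegral_swap (mg.aemeasurable), lintegral_congr hinner_x, lmass]
  have hae1 : ∀ᵐ w : Z × Y ∂μZ.prod μY,
      (∫⁻ x, ENNReal.ofReal (p (x, w.2)) * ENNReal.ofReal (k x w.1) ∂μX) < ∞ :=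
    ae_lt_top minner (by rw [hT]; exact ENNReal.ofReal_ne_top)
  have concl1 : ∀ᵐ w : Z × Y ∂μZ.prod μY, Integrable (fun x => p (x, w.2) * k x w.1) μX ∧
      ENNReal.ofReal (pzy w) = ∫⁻ x, ENNReal.ofReal (p (x, w.2)) * ENNReal.ofReal (k x w.1) ∂μX := by
    filter_upwards [hae1] with w hw
    obtain ⟨z, y⟩ := w
    have mslice : Measurable fun x => p (x, y) * k x z :=
      (hpm.comp (measurable_id.prodMk measurable_const)).mul (mkz z)
    have heq : ∫⁻ x, ENNReal.ofReal (p (x, y) * k x z) ∂μX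
        = ∫⁻ x, ENNReal.ofReal (p (x, y)) * ENNReal.ofReal (k x z) ∂μX :=
      lintegral_congr fun x => ENNReal.ofReal_mul (hp0 _)
    have hint : Integrable (fun x => p (x, y) * k x z) μX := by
      refine ⟨mslice.aestronglyMeasurable, ?_⟩
      rw [hasFiniteIntegral_iff_ofReal
        (Filter.Eventually.of_forall fun x => mul_nonneg (hp0 _) (hk0 _ _)), heq]
      exact hw
    refine ⟨hint, ?_⟩
    rw [hpzy z y, ofReal_integral_eq_lintegral_ofReal hint
      (Filter.Eventually.of_forall fun x => mul_nonneg (hp0 _) (hk0 _ _)), heq]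
  refine ⟨concl1, ?_⟩
  have mg2 : Measurable fun q : Z × X =>
      ENNReal.ofReal (px q.2) * ENNReal.ofReal (k q.2 q.1) :=
    ((mpx.comp measurable_snd).ennreal_ofReal).mul
      ((hkm.comp (measurable_snd.prodMk measurable_fst)).ennreal_ofReal)
  have mS : Measurable fun z => ∫⁻ x, ENNReal.ofReal (px x) * ENNReal.ofReal (k x z) ∂μX :=
    mg2.lintegral_prod_right'
  have hS : ∫⁻ z, (∫⁻ x, ENNReal.ofReal (px x) * ENNReal.ofReal (k x z) ∂μX) ∂μZ
      = ENNReal.ofReal (∫ w, p w ∂μX.prod μY) := by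
    rw [lintegral_lintegral_swap (mg2.aemeasurable)]
    have : ∀ x, ∫⁻ z, ENNReal.ofReal (px x) * ENNReal.ofReal (k x z) ∂μZ
        = ENNReal.ofReal (px x) := by
      intro x
      rw [lintegral_const_mul _ (mkx x).ennreal_ofReal, lk x, mul_one]
    rw [lintegral_congr this, lmass]
  have hae2 : ∀ᵐ z ∂μZ,
      (∫⁻ x, ENNReal.ofReal (px x) * ENNReal.ofReal (k x z) ∂μX) < ∞ :=
    ae_lt_top mS (by rw [hS]; exact ENNReal.ofReal_ne_top)
  have hae3 : ∀ᵐ z ∂μZ, ∀ᵐ y ∂μY,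
      Integrable (fun x => p (x, y) * k x z) μX ∧
      ENNReal.ofReal (pzy (z, y)) = ∫⁻ x, ENNReal.ofReal (p (x, y)) * ENNReal.ofReal (k x z) ∂μX :=
    Measure.ae_ae_of_ae_prod concl1
  filter_upwards [hae2, hae3] with z hz hy
  have e1 : ENNReal.ofReal (pz z) = ∫⁻ y, ENNReal.ofReal (pzy (z, y)) ∂μY := by
    rw [hpz z, ofReal_integral_eq_lintegral_ofReal (hpzsl z)
      (Filter.Eventually.of_forall fun y => pzy0 (z, y))]
  have e2 : ∫⁻ y, ENNReal.ofReal (pzy (z, y)) ∂μY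
      = ∫⁻ y, ∫⁻ x, ENNReal.ofReal (p (x, y)) * ENNReal.ofReal (k x z) ∂μX ∂μY :=
    lintegral_congr_ae (hy.mono fun y h => h.2)
  have mg3 : Measurable fun q : Y × X =>
      ENNReal.ofReal (p (q.2, q.1)) * ENNReal.ofReal (k q.2 z) :=
    ((hpm.comp (measurable_snd.prodMk measurable_fst)).ennreal_ofReal).mul
      (((mkz z).comp measurable_snd).ennreal_ofReal)
  have e3 : ∫⁻ y, ∫⁻ x, ENNReal.ofReal (p (x, y)) * ENNReal.ofReal (k x z) ∂μX ∂μY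
      = ∫⁻ x, ∫⁻ y, ENNReal.ofReal (p (x, y)) * ENNReal.ofReal (k x z) ∂μY ∂μX :=
    lintegral_lintegral_swap (mg3.aemeasurable)
  have e4 : ∫⁻ x, ∫⁻ y, ENNReal.ofReal (p (x, y)) * ENNReal.ofReal (k x z) ∂μY ∂μX
      = ∫⁻ x, ENNReal.ofReal (px x) * ENNReal.ofReal (k x z) ∂μX := by
    refine lintegral_congr fun x => ?_
    rw [lintegral_mul_const _ (show Measurable fun y => ENNReal.ofReal (p (x, y)) from
      (hpm.comp measurable_prodMk_left).ennreal_ofReal), lpx x]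
  have hkey : ENNReal.ofReal (pz z)
      = ∫⁻ x, ENNReal.ofReal (px x) * ENNReal.ofReal (k x z) ∂μX := by
    rw [e1, e2, e3, e4]
  have heq2 : ∫⁻ x, ENNReal.ofReal (px x * k x z) ∂μX
      = ∫⁻ x, ENNReal.ofReal (px x) * ENNReal.ofReal (k x z) ∂μX :=
    lintegral_congr fun x => ENNReal.ofReal_mul (px0 x)
  have mpxk : Measurable fun x => px x * k x z := mpx.mul (mkz z)
  have hint2 : Integrable (fun x => px x * k x z) μX := by
    refine ⟨mpxk.aestronglyMeasurable, ?_⟩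
    rw [hasFiniteIntegral_iff_ofReal
      (Filter.Eventually.of_forall fun x => mul_nonneg (px0 x) (hk0 x z)), heq2]
    exact hkey ▸ hz
  refine ⟨hint2, ?_, by rw [← hkey]⟩
  rw [integral_eq_lintegral_of_nonneg_ae
    (Filter.Eventually.of_forall fun x => mul_nonneg (px0 x) (hk0 x z))
    mpxk.aestronglyMeasurable, heq2, ← hkey, ENNReal.toReal_ofReal (pz0 z)]

/-- Proposition 2: under sufficiency `I_S(z;y) = I_S(x;y)`, consistency
`p_S(y|x) = E_{p(z|x)}[p_S(y|z)]`, and bounded ratio `p_T(x,y)/p_S(x,y) ≤ N`,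
the conditional misalignment in representation space is bounded by the one in
input space:
`E_{p_T(z)}[KL(p_T(y|z)‖p_S(y|z))] ≤ E_{p_T(x)}[KL(p_T(y|x)‖p_S(y|x))]`. -/
theorem stmt9 {X Y Z : Type*} [MeasurableSpace X] [MeasurableSpace Y] [MeasurableSpace Z]
    (μX : Measure X) (μY : Measure Y) (μZ : Measure Z)
    [SigmaFinite μX] [SigmaFinite μY] [SigmaFinite μZ]
    (pSxy pTxy : X × Y → ℝ) (k : X → Z → ℝ) (N : ℝ)
    (pSx pTx : X → ℝ) (pSy : Y → ℝ) (pSz pTz : Z → ℝ)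
    (pSzy pTzy : Z × Y → ℝ)
    (pSyx pTyx : X → Y → ℝ) (pSyz pTyz : Z → Y → ℝ)
    -- joint densities and the shared channel
    (hSm : Measurable pSxy) (hTm : Measurable pTxy)
    (hkm : Measurable (fun w : X × Z => k w.1 w.2))
    (hS0 : ∀ w, 0 < pSxy w) (hT0 : ∀ w, 0 ≤ pTxy w)
    (hS1 : ∫ w, pSxy w ∂μX.prod μY = 1) (hT1 : ∫ w, pTxy w ∂μX.prod μY = 1)
    (hk0 : ∀ x z, 0 ≤ k x z) (hk1 : ∀ x, ∫ z, k x z ∂μZ = 1)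
    -- marginals
    (hpSx : ∀ x, pSx x = ∫ y, pSxy (x, y) ∂μY)
    (hpTx : ∀ x, pTx x = ∫ y, pTxy (x, y) ∂μY)
    (hpSy : ∀ y, pSy y = ∫ x, pSxy (x, y) ∂μX)
    (hpSzy : ∀ z y, pSzy (z, y) = ∫ x, pSxy (x, y) * k x z ∂μX)
    (hpTzy : ∀ z y, pTzy (z, y) = ∫ x, pTxy (x, y) * k x z ∂μX)
    (hpSz : ∀ z, pSz z = ∫ y, pSzy (z, y) ∂μY)
    (hpTz : ∀ z, pTz z = ∫ y, pTzy (z, y) ∂μY)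
    -- conditionals
    (hpSyx : ∀ x y, pSyx x y = pSxy (x, y) / pSx x)
    (hpTyx : ∀ x y, pTyx x y = pTxy (x, y) / pTx x)
    (hpSyz : ∀ z y, pSyz z y = pSzy (z, y) / pSz z)
    (hpTyz : ∀ z y, pTyz z y = pTzy (z, y) / pTz z)
    -- positivity of the denominators
    (hpSx0 : ∀ x, 0 < pSx x) (hpTx0 : ∀ x, 0 < pTx x)
    (hpSz0 : ∀ z, 0 < pSz z) (hpTz0 : ∀ z, 0 < pTz z)
    -- Assumption 1 (sufficiency): I_S(z;y) = I_S(x;y)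
    (hsuff : ∫ w, pSzy w * Real.log (pSzy w / (pSz w.1 * pSy w.2)) ∂μZ.prod μY
      = ∫ w, pSxy w * Real.log (pSxy w / (pSx w.1 * pSy w.2)) ∂μX.prod μY)
    -- Assumption 2 (consistency): p_S(y|x) = E_{p(z|x)}[p_S(y|z)]
    (hcons : ∀ x y, pSyx x y = ∫ z, k x z * pSyz z y ∂μZ)
    -- bounded density ratio
    (hratio : ∀ w, pTxy w ≤ N * pSxy w)
    -- integrability of the conditional KL terms
    (hintz : Integrable (fun z => pTz z *
      ∫ y, pTyz z y * Real.log (pTyz z y / pSyz z y) ∂μY) μZ)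
    (hintx : Integrable (fun x => pTx x *
      ∫ y, pTyx x y * Real.log (pTyx x y / pSyx x y) ∂μY) μX) :
    ∫ z, pTz z * ∫ y, pTyz z y * Real.log (pTyz z y / pSyz z y) ∂μY ∂μZ
      ≤ ∫ x, pTx x * ∫ y, pTyx x y * Real.log (pTyx x y / pSyx x y) ∂μY ∂μX := by
  classical
  -- ## Part I : basic measurability, integrability, positivity
  have mkx : ∀ x, Measurable (k x) := fun x => hkm.comp measurable_prodMk_left
  have mkz : ∀ z, Measurable fun x => k x z := fun z => hkm.comp measurable_prodMk_right
  have mpSx : Measurable pSx := by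
    rw [show pSx = fun x => ∫ y, pSxy (x, y) ∂μY from funext hpSx]
    exact (hSm.stronglyMeasurable.integral_prod_right').measurable
  have mpTx : Measurable pTx := by
    rw [show pTx = fun x => ∫ y, pTxy (x, y) ∂μY from funext hpTx]
    exact (hTm.stronglyMeasurable.integral_prod_right').measurable
  have mpSzy : Measurable pSzy := by
    rw [show pSzy = fun w : Z × Y => ∫ x, pSxy (x, w.2) * k x w.1 ∂μX from
      funext fun w => by rw [← hpSzy w.1 w.2]]
    exact (((hSm.comp (measurable_snd.prodMk measurable_fst.snd)).mul
      (hkm.comp (measurable_snd.prodMk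
        measurable_fst.fst))).stronglyMeasurable.integral_prod_right').measurable
  have mpTzy : Measurable pTzy := by
    rw [show pTzy = fun w : Z × Y => ∫ x, pTxy (x, w.2) * k x w.1 ∂μX from
      funext fun w => by rw [← hpTzy w.1 w.2]]
    exact (((hTm.comp (measurable_snd.prodMk measurable_fst.snd)).mul
      (hkm.comp (measurable_snd.prodMk
        measurable_fst.fst))).stronglyMeasurable.integral_prod_right').measurable
  have mpSz : Measurable pSz := by
    rw [show pSz = fun z => ∫ y, pSzy (z, y) ∂μY from funext hpSz]
    exact (mpSzy.stronglyMeasurable.integral_prod_right').measurable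
  have mpTz : Measurable pTz := by
    rw [show pTz = fun z => ∫ y, pTzy (z, y) ∂μY from funext hpTz]
    exact (mpTzy.stronglyMeasurable.integral_prod_right').measurable
  have mP : Measurable fun w : X × Y => pSyx w.1 w.2 := by
    rw [show (fun w : X × Y => pSyx w.1 w.2) = fun w => pSxy w / pSx w.1 from
      funext fun w => by rw [hpSyx w.1 w.2, Prod.mk.eta]]
    exact hSm.div (mpSx.comp measurable_fst)
  have mPT : Measurable fun w : X × Y => pTyx w.1 w.2 := by
    rw [show (fun w : X × Y => pTyx w.1 w.2) = fun w => pTxy w / pTx w.1 from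
      funext fun w => by rw [hpTyx w.1 w.2, Prod.mk.eta]]
    exact hTm.div (mpTx.comp measurable_fst)
  have mQ : Measurable fun w : Z × Y => pSyz w.1 w.2 := by
    rw [show (fun w : Z × Y => pSyz w.1 w.2) = fun w => pSzy w / pSz w.1 from
      funext fun w => by rw [hpSyz w.1 w.2, Prod.mk.eta]]
    exact mpSzy.div (mpSz.comp measurable_fst)
  have mQT : Measurable fun w : Z × Y => pTyz w.1 w.2 := by
    rw [show (fun w : Z × Y => pTyz w.1 w.2) = fun w => pTzy w / pTz w.1 from
      funext fun w => by rw [hpTyz w.1 w.2, Prod.mk.eta]]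
    exact mpTzy.div (mpTz.comp measurable_fst)
  have pSxy0 : ∀ w, (0:ℝ) ≤ pSxy w := fun w => (hS0 w).le
  have pSzy0 : ∀ w : Z × Y, 0 ≤ pSzy w := fun w => by
    have h := hpSzy w.1 w.2
    simp only [Prod.mk.eta] at h
    exact h ▸ integral_nonneg fun x => mul_nonneg (pSxy0 _) (hk0 _ _)
  have pTzy0 : ∀ w : Z × Y, 0 ≤ pTzy w := fun w => by
    have h := hpTzy w.1 w.2
    simp only [Prod.mk.eta] at h
    exact h ▸ integral_nonneg fun x => mul_nonneg (hT0 _) (hk0 _ _)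
  have pSyx_pos : ∀ x y, 0 < pSyx x y := fun x y => by
    rw [hpSyx x y]; exact div_pos (hS0 _) (hpSx0 x)
  have pTyx0 : ∀ x y, 0 ≤ pTyx x y := fun x y => by
    rw [hpTyx x y]; exact div_nonneg (hT0 _) (hpTx0 x).le
  have pSyz0 : ∀ z y, 0 ≤ pSyz z y := fun z y => by
    rw [hpSyz z y]; exact div_nonneg (pSzy0 (z, y)) (hpSz0 z).le
  have pTyz0 : ∀ z y, 0 ≤ pTyz z y := fun z y => by
    rw [hpTyz z y]; exact div_nonneg (pTzy0 (z, y)) (hpTz0 z).le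
  have pSxyEq : ∀ x y, pSx x * pSyx x y = pSxy (x, y) := fun x y => by
    rw [hpSyx x y, mul_comm, div_mul_cancel₀ _ (hpSx0 x).ne']
  have pSzyEq : ∀ z y, pSz z * pSyz z y = pSzy (z, y) := fun z y => by
    rw [hpSyz z y, mul_comm, div_mul_cancel₀ _ (hpSz0 z).ne']
  have iS : Integrable pSxy (μX.prod μY) :=
    integrable_of_integral_ne_zero (by rw [hS1]; norm_num)
  have iT : Integrable pTxy (μX.prod μY) :=
    integrable_of_integral_ne_zero (by rw [hT1]; norm_num)
  have iSy : ∀ x, Integrable (fun y => pSxy (x, y)) μY := fun x =>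
    integrable_of_integral_ne_zero (by rw [← hpSx x]; exact (hpSx0 x).ne')
  have iTy : ∀ x, Integrable (fun y => pTxy (x, y)) μY := fun x =>
    integrable_of_integral_ne_zero (by rw [← hpTx x]; exact (hpTx0 x).ne')
  have iK : ∀ x, Integrable (k x) μZ := fun x =>
    integrable_of_integral_ne_zero (by rw [hk1 x]; norm_num)
  have iSzy : ∀ z, Integrable (fun y => pSzy (z, y)) μY := fun z =>
    integrable_of_integral_ne_zero (by rw [← hpSz z]; exact (hpSz0 z).ne')
  have iTzy : ∀ z, Integrable (fun y => pTzy (z, y)) μY := fun z =>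
    integrable_of_integral_ne_zero (by rw [← hpTz z]; exact (hpTz0 z).ne')
  have iPy : ∀ x, Integrable (fun y => pSyx x y) μY := fun x =>
    ((iSy x).div_const (pSx x)).congr
      (Filter.Eventually.of_forall fun y => (hpSyx x y).symm)
  have iQy : ∀ z, Integrable (fun y => pSyz z y) μY := fun z =>
    ((iSzy z).div_const (pSz z)).congr
      (Filter.Eventually.of_forall fun y => (hpSyz z y).symm)
  have iQTy : ∀ z, Integrable (fun y => pTyz z y) μY := fun z =>
    ((iTzy z).div_const (pTz z)).congr
      (Filter.Eventually.of_forall fun y => (hpTyz z y).symm)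
  have nSx : ∀ x, ∫ y, pSyx x y ∂μY = 1 := fun x => by
    simp only [hpSyx]
    rw [integral_div, ← hpSx x, div_self (hpSx0 x).ne']
  have nTx : ∀ x, ∫ y, pTyx x y ∂μY = 1 := fun x => by
    simp only [hpTyx]
    rw [integral_div, ← hpTx x, div_self (hpTx0 x).ne']
  have nSz : ∀ z, ∫ y, pSyz z y ∂μY = 1 := fun z => by
    simp only [hpSyz]
    rw [integral_div, ← hpSz z, div_self (hpSz0 z).ne']
  have nTz : ∀ z, ∫ y, pTyz z y ∂μY = 1 := fun z => by
    simp only [hpTyz]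
    rw [integral_div, ← hpTz z, div_self (hpTz0 z).ne']
  have iPSx : Integrable pSx μX :=
    iS.integral_prod_left.congr (Filter.Eventually.of_forall fun x => (hpSx x).symm)
  have iPTx : Integrable pTx μX :=
    iT.integral_prod_left.congr (Filter.Eventually.of_forall fun x => (hpTx x).symm)
  have hSxmass : ∫ x, pSx x ∂μX = 1 := by
    have h : ∫ x, pSx x ∂μX = ∫ x, ∫ y, pSxy (x, y) ∂μY ∂μX :=
      integral_congr_ae (Filter.Eventually.of_forall fun x => hpSx x)
    rw [h, ← integral_prod _ iS, hS1]
  have lk : ∀ x, ∫⁻ z, ENNReal.ofReal (k x z) ∂μZ = 1 := fun x => by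
    rw [← ofReal_integral_eq_lintegral_ofReal (iK x)
      (Filter.Eventually.of_forall (hk0 x)), hk1 x, ENNReal.ofReal_one]
  have hN1 : (1:ℝ) ≤ N := by
    have h := integral_mono iT (iS.const_mul N) hratio
    rw [hT1, integral_const_mul, hS1, mul_one] at h
    exact h
  have hN0 : (0:ℝ) < N := lt_of_lt_of_le one_pos hN1
  have hpTxle : ∀ x, pTx x ≤ N * pSx x := fun x => by
    have h := integral_mono (iTy x) ((iSy x).const_mul N) (fun y => hratio (x, y))
    rw [integral_const_mul] at h
    rw [hpTx x, hpSx x]; exact h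
  obtain ⟨fS1, fS2⟩ := kernel_facts μX μY μZ pSxy k pSx pSzy pSz hSm hkm pSxy0 hk0
    iS iSy iK hk1 hpSx hpSzy iSzy hpSz
  obtain ⟨fT1, fT2⟩ := kernel_facts μX μY μZ pTxy k pTx pTzy pTz hTm hkm hT0 hk0
    iT iTy iK hk1 hpTx hpTzy iTzy hpTz
  have hTzyle : ∀ᵐ w : Z × Y ∂μZ.prod μY, pTzy w ≤ N * pSzy w := by
    filter_upwards [fS1, fT1] with w hSw hTw
    obtain ⟨z, y⟩ := w
    have h := integral_mono hTw.1 ((hSw.1).const_mul N) (fun x => by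
      calc pTxy (x, y) * k x z ≤ (N * pSxy (x, y)) * k x z :=
            mul_le_mul_of_nonneg_right (hratio (x, y)) (hk0 x z)
        _ = N * (pSxy (x, y) * k x z) := by ring)
    rw [integral_const_mul] at h
    rw [hpTzy z y, hpSzy z y]
    exact h
  -- ## Part II : rigidity — pSyz agrees with pSyx on the support of k
  have KeyS' : ∀ᵐ z ∂μZ, ∀ᵐ y ∂μY, ∀ᵐ x ∂μX, k x z ≠ 0 → pSyz z y = pSyx x y := by
    have hconsInt : ∀ x y, Integrable (fun z => k x z * pSyz z y) μZ := fun x y =>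
      integrable_of_integral_ne_zero (by rw [← hcons x y]; exact (pSyx_pos x y).ne')
    have mQy : ∀ y, Measurable fun z => pSyz z y := fun y =>
      mQ.comp (measurable_id.prodMk measurable_const)
    have mPy : ∀ y, Measurable fun x => pSyx x y := fun y =>
      mP.comp (measurable_id.prodMk measurable_const)
    have jens : ∀ x y, _ := fun x y => jensen_phi μZ (k x) (fun z => pSyz z y)
      (mkx x) (mQy y) (hk0 x) (fun z => pSyz0 z y) (iK x) (hk1 x) (hconsInt x y)
    have hgap0 : ∀ x y, 0 ≤ (∫ z, k x z * phiFn (pSyz z y) ∂μZ) - phiFn (pSyx x y) := by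
      intro x y
      have h := (jens x y).1
      rw [← hcons x y] at h
      linarith
    have hkphiQint : ∀ x y, Integrable (fun z => k x z * phiFn (pSyz z y)) μZ := fun x y => by
      refine (hconsInt x y).mono'
        ((mkx x).mul (phiFn_measurable.comp (mQy y))).aestronglyMeasurable
        (Filter.Eventually.of_forall fun z => ?_)
      rw [Real.norm_eq_abs, abs_mul, abs_of_nonneg (hk0 x z),
        abs_of_nonneg (phiFn_nonneg (pSyz0 z y))]
      exact mul_le_mul_of_nonneg_left (phiFn_le (pSyz0 z y)) (hk0 x z)
    have mphiP : Measurable fun w : X × Y => phiFn (pSyx w.1 w.2) := phiFn_measurable.comp mP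
    have mphiQ : Measurable fun w : Z × Y => phiFn (pSyz w.1 w.2) := phiFn_measurable.comp mQ
    have mIkphiQ : Measurable fun w : X × Y => ∫ z, k w.1 z * phiFn (pSyz z w.2) ∂μZ :=
      (((hkm.comp (measurable_fst.fst.prodMk measurable_snd)).mul
        (mphiQ.comp (measurable_snd.prodMk
          measurable_fst.snd))).stronglyMeasurable.integral_prod_right').measurable
    have mgap : Measurable fun w : X × Y =>
        (∫ z, k w.1 z * phiFn (pSyz z w.2) ∂μZ) - phiFn (pSyx w.1 w.2) := mIkphiQ.sub mphiP
    have mhP : Measurable fun x => ∫⁻ y, ENNReal.ofReal (phiFn (pSyx x y)) ∂μY :=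
      (mphiP.ennreal_ofReal).lintegral_prod_right'
    have mhQ : Measurable fun z => ∫⁻ y, ENNReal.ofReal (phiFn (pSyz z y)) ∂μY :=
      (mphiQ.ennreal_ofReal).lintegral_prod_right'
    have hinnerP : ∀ x, (∫⁻ y, ENNReal.ofReal (phiFn (pSyx x y)) ∂μY) ≤ 1 := fun x => by
      calc ∫⁻ y, ENNReal.ofReal (phiFn (pSyx x y)) ∂μY
          ≤ ∫⁻ y, ENNReal.ofReal (pSyx x y) ∂μY :=
            lintegral_mono fun y => ENNReal.ofReal_le_ofReal (phiFn_le (pSyx_pos x y).le)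
        _ = ENNReal.ofReal (∫ y, pSyx x y ∂μY) :=
            (ofReal_integral_eq_lintegral_ofReal (iPy x)
              (Filter.Eventually.of_forall fun y => (pSyx_pos x y).le)).symm
        _ = 1 := by rw [nSx x, ENNReal.ofReal_one]
    have hAA_le : (∫⁻ x, ENNReal.ofReal (pSx x) *
        ∫⁻ y, ENNReal.ofReal (phiFn (pSyx x y)) ∂μY ∂μX) ≤ 1 := by
      calc ∫⁻ x, ENNReal.ofReal (pSx x) * ∫⁻ y, ENNReal.ofReal (phiFn (pSyx x y)) ∂μY ∂μX
          ≤ ∫⁻ x, ENNReal.ofReal (pSx x) * 1 ∂μX :=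
            lintegral_mono fun x => mul_le_mul_right (hinnerP x) _
        _ = ∫⁻ x, ENNReal.ofReal (pSx x) ∂μX := by simp
        _ = 1 := by
            rw [← ofReal_integral_eq_lintegral_ofReal iPSx
              (Filter.Eventually.of_forall fun x => (hpSx0 x).le), hSxmass, ENNReal.ofReal_one]
    have hAAfin : (∫⁻ x, ENNReal.ofReal (pSx x) *
        ∫⁻ y, ENNReal.ofReal (phiFn (pSyx x y)) ∂μY ∂μX) ≠ ∞ :=
      ne_top_of_le_ne_top ENNReal.one_ne_top hAA_le
    have s1 : ∀ x y, ENNReal.ofReal (∫ z, k x z * phiFn (pSyz z y) ∂μZ)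
        = ∫⁻ z, ENNReal.ofReal (k x z) * ENNReal.ofReal (phiFn (pSyz z y)) ∂μZ := fun x y => by
      rw [ofReal_integral_eq_lintegral_ofReal (hkphiQint x y)
        (Filter.Eventually.of_forall fun z => mul_nonneg (hk0 x z) (phiFn_nonneg (pSyz0 z y)))]
      exact lintegral_congr fun z => ENNReal.ofReal_mul (hk0 x z)
    -- chain A : the mixed quantity equals BB
    have chainA : (∫⁻ x, ENNReal.ofReal (pSx x) *
          ∫⁻ y, ENNReal.ofReal (∫ z, k x z * phiFn (pSyz z y) ∂μZ) ∂μY ∂μX)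
        = ∫⁻ z, ENNReal.ofReal (pSz z) *
            ∫⁻ y, ENNReal.ofReal (phiFn (pSyz z y)) ∂μY ∂μZ := by
      have e0 : ∀ x, ENNReal.ofReal (pSx x) *
          ∫⁻ y, ENNReal.ofReal (∫ z, k x z * phiFn (pSyz z y) ∂μZ) ∂μY
          = ∫⁻ z, ENNReal.ofReal (pSx x) * (ENNReal.ofReal (k x z) *
              ∫⁻ y, ENNReal.ofReal (phiFn (pSyz z y)) ∂μY) ∂μZ := by
        intro x
        have e1 : ∫⁻ y, ENNReal.ofReal (∫ z, k x z * phiFn (pSyz z y) ∂μZ) ∂μY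
            = ∫⁻ y, ∫⁻ z, ENNReal.ofReal (k x z) * ENNReal.ofReal (phiFn (pSyz z y)) ∂μZ ∂μY :=
          lintegral_congr fun y => s1 x y
        have e2 : ∫⁻ y, ∫⁻ z, ENNReal.ofReal (k x z) * ENNReal.ofReal (phiFn (pSyz z y)) ∂μZ ∂μY
            = ∫⁻ z, ∫⁻ y, ENNReal.ofReal (k x z) * ENNReal.ofReal (phiFn (pSyz z y)) ∂μY ∂μZ := by
          apply lintegral_lintegral_swap
          exact ((((mkx x).comp measurable_snd).ennreal_ofReal).mul
            ((mphiQ.comp (measurable_snd.prodMk measurable_fst)).ennreal_ofReal)).aemeasurable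
        have e3 : ∫⁻ z, ∫⁻ y, ENNReal.ofReal (k x z) * ENNReal.ofReal (phiFn (pSyz z y)) ∂μY ∂μZ
            = ∫⁻ z, ENNReal.ofReal (k x z) * ∫⁻ y, ENNReal.ofReal (phiFn (pSyz z y)) ∂μY ∂μZ :=
          lintegral_congr fun z => lintegral_const_mul _
            (show Measurable fun y => ENNReal.ofReal (phiFn (pSyz z y)) from
              (mphiQ.comp (measurable_prodMk_left)).ennreal_ofReal)
        rw [e1, e2, e3, ← lintegral_const_mul (f := fun z => ENNReal.ofReal (k x z) *
          ∫⁻ y, ENNReal.ofReal (phiFn (pSyz z y)) ∂μY) _ (((mkx x).ennreal_ofReal).mul mhQ)]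
      rw [lintegral_congr e0]
      have eswap : ∫⁻ x, ∫⁻ z, ENNReal.ofReal (pSx x) * (ENNReal.ofReal (k x z) *
          ∫⁻ y, ENNReal.ofReal (phiFn (pSyz z y)) ∂μY) ∂μZ ∂μX
          = ∫⁻ z, ∫⁻ x, ENNReal.ofReal (pSx x) * (ENNReal.ofReal (k x z) *
              ∫⁻ y, ENNReal.ofReal (phiFn (pSyz z y)) ∂μY) ∂μX ∂μZ := by
        apply lintegral_lintegral_swap
        exact (((mpSx.comp measurable_fst).ennreal_ofReal).mul
          ((hkm.ennreal_ofReal).mul (mhQ.comp measurable_snd))).aemeasurable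
      rw [eswap]
      refine lintegral_congr_ae (fS2.mono fun z hz => ?_)
      beta_reduce
      have e4 : ∫⁻ x, ENNReal.ofReal (pSx x) * (ENNReal.ofReal (k x z) *
          ∫⁻ y, ENNReal.ofReal (phiFn (pSyz z y)) ∂μY) ∂μX
          = ∫⁻ x, (ENNReal.ofReal (pSx x) * ENNReal.ofReal (k x z)) *
              (∫⁻ y, ENNReal.ofReal (phiFn (pSyz z y)) ∂μY) ∂μX :=
        lintegral_congr fun x => by ring
      rw [e4, lintegral_mul_const (f := fun x => ENNReal.ofReal (pSx x) * ENNReal.ofReal (k x z))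
        _ ((mpSx.ennreal_ofReal).mul ((mkz z).ennreal_ofReal)),
        ← hz.2.2]
    -- split the mixed quantity as AA + GG
    have hdec : ∀ x y, ENNReal.ofReal (∫ z, k x z * phiFn (pSyz z y) ∂μZ)
        = ENNReal.ofReal (phiFn (pSyx x y)) +
          ENNReal.ofReal ((∫ z, k x z * phiFn (pSyz z y) ∂μZ) - phiFn (pSyx x y)) := by
      intro x y
      rw [← ENNReal.ofReal_add (phiFn_nonneg (pSyx_pos x y).le) (hgap0 x y)]
      congr 1; ring
    have hsplit : (∫⁻ x, ENNReal.ofReal (pSx x) *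
          ∫⁻ y, ENNReal.ofReal (∫ z, k x z * phiFn (pSyz z y) ∂μZ) ∂μY ∂μX)
        = (∫⁻ x, ENNReal.ofReal (pSx x) *
            ∫⁻ y, ENNReal.ofReal (phiFn (pSyx x y)) ∂μY ∂μX) +
          (∫⁻ x, ENNReal.ofReal (pSx x) * ∫⁻ y, ENNReal.ofReal
            ((∫ z, k x z * phiFn (pSyz z y) ∂μZ) - phiFn (pSyx x y)) ∂μY ∂μX) := by
      have einner : ∀ x, ∫⁻ y, ENNReal.ofReal (∫ z, k x z * phiFn (pSyz z y) ∂μZ) ∂μY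
          = (∫⁻ y, ENNReal.ofReal (phiFn (pSyx x y)) ∂μY) +
            ∫⁻ y, ENNReal.ofReal ((∫ z, k x z * phiFn (pSyz z y) ∂μZ) - phiFn (pSyx x y)) ∂μY := by
        intro x
        rw [← lintegral_add_left (show Measurable fun y => ENNReal.ofReal (phiFn (pSyx x y)) from
          (mphiP.comp measurable_prodMk_left).ennreal_ofReal)]
        exact lintegral_congr fun y => hdec x y
      have : ∀ x, ENNReal.ofReal (pSx x) *
          ∫⁻ y, ENNReal.ofReal (∫ z, k x z * phiFn (pSyz z y) ∂μZ) ∂μY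
          = ENNReal.ofReal (pSx x) * (∫⁻ y, ENNReal.ofReal (phiFn (pSyx x y)) ∂μY) +
            ENNReal.ofReal (pSx x) * ∫⁻ y, ENNReal.ofReal
              ((∫ z, k x z * phiFn (pSyz z y) ∂μZ) - phiFn (pSyx x y)) ∂μY := by
        intro x; rw [einner x, mul_add]
      rw [lintegral_congr this]
      exact lintegral_add_left ((mpSx.ennreal_ofReal).mul mhP) _
    -- chain B : BB ≤ AA
    have hae_zy := Measure.ae_ae_of_ae_prod fS1
    have chainB : (∫⁻ z, ENNReal.ofReal (pSz z) *
          ∫⁻ y, ENNReal.ofReal (phiFn (pSyz z y)) ∂μY ∂μZ)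
        ≤ ∫⁻ x, ENNReal.ofReal (pSx x) *
            ∫⁻ y, ENNReal.ofReal (phiFn (pSyx x y)) ∂μY ∂μX := by
      have step1 : ∀ᵐ z ∂μZ, ENNReal.ofReal (pSz z) *
          ∫⁻ y, ENNReal.ofReal (phiFn (pSyz z y)) ∂μY
          ≤ ∫⁻ y, ∫⁻ x, ENNReal.ofReal (pSx x) * ENNReal.ofReal (k x z) *
              ENNReal.ofReal (phiFn (pSyx x y)) ∂μX ∂μY := by
        filter_upwards [fS2, hae_zy] with z hz hzy
        have perY : ∀ᵐ y ∂μY, ENNReal.ofReal (pSz z) * ENNReal.ofReal (phiFn (pSyz z y))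
            ≤ ∫⁻ x, ENNReal.ofReal (pSx x) * ENNReal.ofReal (k x z) *
                ENNReal.ofReal (phiFn (pSyx x y)) ∂μX := by
          filter_upwards [hzy] with y hy
          have hweq : ∀ x, pSxy (x, y) * k x z / pSz z
              = (pSx x * k x z / pSz z) * pSyx x y := fun x => by
            rw [← pSxyEq x y]; ring
          have hw1 : ∫ x, pSx x * k x z / pSz z ∂μX = 1 := by
            rw [integral_div, ← hz.2.1, div_self (hpSz0 z).ne']
          have hwf : Integrable (fun x => (pSx x * k x z / pSz z) * pSyx x y) μX :=
            ((hy.1).div_const (pSz z)).congr (Filter.Eventually.of_forall fun x => hweq x)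
          have jB := (jensen_phi μX (fun x => pSx x * k x z / pSz z) (fun x => pSyx x y)
            ((mpSx.mul (mkz z)).div_const _) (mPy y)
            (fun x => div_nonneg (mul_nonneg (hpSx0 x).le (hk0 x z)) (hpSz0 z).le)
            (fun x => (pSyx_pos x y).le) ((hz.1).div_const _) hw1 hwf).1
          have hwf_eq : ∫ x, (pSx x * k x z / pSz z) * pSyx x y ∂μX = pSyz z y := by
            rw [← integral_congr_ae (Filter.Eventually.of_forall fun x => hweq x),
              integral_div, ← hpSzy z y, ← hpSyz z y]
          rw [hwf_eq] at jB
          have hintphi : Integrable (fun x => pSx x * k x z * phiFn (pSyx x y)) μX := by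
            refine (hy.1).mono' ((mpSx.mul (mkz z)).mul
              (phiFn_measurable.comp (mPy y))).aestronglyMeasurable
              (Filter.Eventually.of_forall fun x => ?_)
            rw [Real.norm_eq_abs, abs_mul, abs_of_nonneg (mul_nonneg (hpSx0 x).le (hk0 x z)),
              abs_of_nonneg (phiFn_nonneg (pSyx_pos x y).le)]
            calc pSx x * k x z * phiFn (pSyx x y) ≤ pSx x * k x z * pSyx x y :=
                  mul_le_mul_of_nonneg_left (phiFn_le (pSyx_pos x y).le)
                    (mul_nonneg (hpSx0 x).le (hk0 x z))
              _ = pSxy (x, y) * k x z := by rw [← pSxyEq x y]; ring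
          calc ENNReal.ofReal (pSz z) * ENNReal.ofReal (phiFn (pSyz z y))
              ≤ ENNReal.ofReal (pSz z) *
                  ENNReal.ofReal (∫ x, (pSx x * k x z / pSz z) * phiFn (pSyx x y) ∂μX) :=
                mul_le_mul_right (ENNReal.ofReal_le_ofReal jB) _
            _ = ENNReal.ofReal (pSz z * ∫ x, (pSx x * k x z / pSz z) * phiFn (pSyx x y) ∂μX) :=
                (ENNReal.ofReal_mul (hpSz0 z).le).symm
            _ = ENNReal.ofReal (∫ x, pSx x * k x z * phiFn (pSyx x y) ∂μX) := by
                congr 1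
                rw [← integral_const_mul]
                refine integral_congr_ae (Filter.Eventually.of_forall fun x => ?_)
                first
                | (field_simp [(hpSz0 z).ne']; ring)
                | field_simp [(hpSz0 z).ne']
            _ = ∫⁻ x, ENNReal.ofReal (pSx x * k x z * phiFn (pSyx x y)) ∂μX :=
                ofReal_integral_eq_lintegral_ofReal hintphi
                  (Filter.Eventually.of_forall fun x =>
                    mul_nonneg (mul_nonneg (hpSx0 x).le (hk0 x z))
                      (phiFn_nonneg (pSyx_pos x y).le))
            _ = ∫⁻ x, ENNReal.ofReal (pSx x) * ENNReal.ofReal (k x z) *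
                  ENNReal.ofReal (phiFn (pSyx x y)) ∂μX :=
                lintegral_congr fun x => by
                  rw [ENNReal.ofReal_mul (mul_nonneg (hpSx0 x).le (hk0 x z)),
                    ENNReal.ofReal_mul (hpSx0 x).le]
        calc ENNReal.ofReal (pSz z) * ∫⁻ y, ENNReal.ofReal (phiFn (pSyz z y)) ∂μY
            = ∫⁻ y, ENNReal.ofReal (pSz z) * ENNReal.ofReal (phiFn (pSyz z y)) ∂μY :=
              (lintegral_const_mul _
                ((mphiQ.comp measurable_prodMk_left).ennreal_ofReal)).symm
          _ ≤ _ := lintegral_mono_ae perY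
      refine le_trans (lintegral_mono_ae step1) (le_of_eq ?_)
      have mtrip : Measurable fun q : (Z × Y) × X =>
          ENNReal.ofReal (pSx q.2) * ENNReal.ofReal (k q.2 q.1.1) *
            ENNReal.ofReal (phiFn (pSyx q.2 q.1.2)) :=
        (((mpSx.comp measurable_snd).ennreal_ofReal).mul
          ((hkm.comp (measurable_snd.prodMk measurable_fst.fst)).ennreal_ofReal)).mul
          ((mphiP.comp (measurable_snd.prodMk measurable_fst.snd)).ennreal_ofReal)
      calc ∫⁻ z, ∫⁻ y, ∫⁻ x, ENNReal.ofReal (pSx x) * ENNReal.ofReal (k x z) *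
              ENNReal.ofReal (phiFn (pSyx x y)) ∂μX ∂μY ∂μZ
          = ∫⁻ w : Z × Y, ∫⁻ x, ENNReal.ofReal (pSx x) * ENNReal.ofReal (k x w.1) *
              ENNReal.ofReal (phiFn (pSyx x w.2)) ∂μX ∂μZ.prod μY :=
            (lintegral_prod _ (mtrip.lintegral_prod_right').aemeasurable).symm
        _ = ∫⁻ x, ∫⁻ w : Z × Y, ENNReal.ofReal (pSx x) * ENNReal.ofReal (k x w.1) *
              ENNReal.ofReal (phiFn (pSyx x w.2)) ∂μZ.prod μY ∂μX :=
            lintegral_lintegral_swap mtrip.aemeasurable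
        _ = ∫⁻ x, ENNReal.ofReal (pSx x) *
              ∫⁻ y, ENNReal.ofReal (phiFn (pSyx x y)) ∂μY ∂μX := by
            refine lintegral_congr fun x => ?_
            have m1 : Measurable fun w : Z × Y => ENNReal.ofReal (pSx x) *
                ENNReal.ofReal (k x w.1) * ENNReal.ofReal (phiFn (pSyx x w.2)) :=
              ((measurable_const.mul (((mkx x).comp measurable_fst).ennreal_ofReal))).mul
                (((mphiP.comp (measurable_const.prodMk measurable_snd)).ennreal_ofReal))
            rw [lintegral_prod _ m1.aemeasurable]
            have inner1 : ∀ z, ∫⁻ y, ENNReal.ofReal (pSx x) * ENNReal.ofReal (k x z) *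
                ENNReal.ofReal (phiFn (pSyx x y)) ∂μY
                = ENNReal.ofReal (k x z) * (ENNReal.ofReal (pSx x) *
                    ∫⁻ y, ENNReal.ofReal (phiFn (pSyx x y)) ∂μY) := by
              intro z
              rw [lintegral_const_mul _ (show Measurable fun y =>
                ENNReal.ofReal (phiFn (pSyx x y)) from
                (mphiP.comp measurable_prodMk_left).ennreal_ofReal)]
              ring
            rw [lintegral_congr inner1, lintegral_mul_const _ ((mkx x).ennreal_ofReal), lk x,
              one_mul]
    -- conclude that the gap term vanishes
    have hGG : (∫⁻ x, ENNReal.ofReal (pSx x) * ∫⁻ y, ENNReal.ofReal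
        ((∫ z, k x z * phiFn (pSyz z y) ∂μZ) - phiFn (pSyx x y)) ∂μY ∂μX) = 0 := by
      have hle : (∫⁻ x, ENNReal.ofReal (pSx x) *
            ∫⁻ y, ENNReal.ofReal (phiFn (pSyx x y)) ∂μY ∂μX) +
          (∫⁻ x, ENNReal.ofReal (pSx x) * ∫⁻ y, ENNReal.ofReal
            ((∫ z, k x z * phiFn (pSyz z y) ∂μZ) - phiFn (pSyx x y)) ∂μY ∂μX)
          ≤ (∫⁻ x, ENNReal.ofReal (pSx x) *
              ∫⁻ y, ENNReal.ofReal (phiFn (pSyx x y)) ∂μY ∂μX) + 0 := by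
        rw [add_zero, ← hsplit, chainA]
        exact chainB
      exact le_zero_iff.mp ((ENNReal.add_le_add_iff_left hAAfin).mp hle)
    have mgapR : Measurable fun x => ∫⁻ y, ENNReal.ofReal
        ((∫ z, k x z * phiFn (pSyz z y) ∂μZ) - phiFn (pSyx x y)) ∂μY :=
      (mgap.ennreal_ofReal).lintegral_prod_right'
    have hae_x : ∀ᵐ x ∂μX, ∫⁻ y, ENNReal.ofReal
        ((∫ z, k x z * phiFn (pSyz z y) ∂μZ) - phiFn (pSyx x y)) ∂μY = 0 := by
      have h0 := (lintegral_eq_zero_iff ((mpSx.ennreal_ofReal).mul mgapR)).mp hGG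
      filter_upwards [h0] with x hx
      rcases mul_eq_zero.mp hx with h | h
      · exact absurd h (by simp [ENNReal.ofReal_eq_zero, not_le, hpSx0 x])
      · exact h
    have KeyXY : ∀ᵐ x ∂μX, ∀ᵐ y ∂μY, ∀ᵐ z ∂μZ, k x z ≠ 0 → pSyz z y = pSyx x y := by
      filter_upwards [hae_x] with x hx
      have h2 := (lintegral_eq_zero_iff
        ((mgap.comp measurable_prodMk_left).ennreal_ofReal)).mp hx
      filter_upwards [h2] with y hy
      have hle : (∫ z, k x z * phiFn (pSyz z y) ∂μZ) - phiFn (pSyx x y) ≤ 0 := by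
        simpa [ENNReal.ofReal_eq_zero] using hy
      have heq : ∫ z, k x z * phiFn (pSyz z y) ∂μZ = phiFn (pSyx x y) :=
        le_antisymm (by linarith) (by linarith [hgap0 x y])
      have h := (jens x y).2 (by rw [← hcons x y]; exact le_of_eq heq)
      filter_upwards [h] with z hz hkz
      rw [hz hkz, ← hcons x y]
    -- reorder the almost-everywhere quantifiers
    set E : Set ((X × Y) × Z) :=
      {q | k q.1.1 q.2 ≠ 0 ∧ pSyz q.2 q.1.2 ≠ pSyx q.1.1 q.1.2} with hE
    have m1 : Measurable fun q : (X × Y) × Z => k q.1.1 q.2 :=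
      hkm.comp (measurable_fst.fst.prodMk measurable_snd)
    have m2 : Measurable fun q : (X × Y) × Z => pSyz q.2 q.1.2 :=
      mQ.comp (measurable_snd.prodMk measurable_fst.snd)
    have m3 : Measurable fun q : (X × Y) × Z => pSyx q.1.1 q.1.2 := mP.comp measurable_fst
    have mE : MeasurableSet E := by
      refine MeasurableSet.inter ?_ ?_
      · exact (m1 (measurableSet_singleton 0)).compl
      · exact (measurableSet_eq_fun m2 m3).compl
    set u : (X × Y) × Z → ℝ≥0∞ := E.indicator fun _ => (1:ℝ≥0∞) with hu
    have mU : Measurable u := measurable_const.indicator mE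
    have u0 : ∀ᵐ x ∂μX, ∀ᵐ y ∂μY, ∫⁻ z, u ((x, y), z) ∂μZ = 0 := by
      filter_upwards [KeyXY] with x hx
      filter_upwards [hx] with y hy
      rw [lintegral_eq_zero_iff (show Measurable fun z => u ((x, y), z) from
        mU.comp measurable_prodMk_left)]
      filter_upwards [hy] with z hz
      simp only [hu, Set.indicator_apply, Pi.zero_apply]
      rw [if_neg]
      intro hmem
      exact hmem.2 (hz hmem.1)
    have tot0 : ∫⁻ q : (X × Y) × Z, u q ∂(μX.prod μY).prod μZ = 0 := by
      rw [lintegral_prod _ mU.aemeasurable,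
        lintegral_prod _ (mU.lintegral_prod_right').aemeasurable]
      have : ∀ᵐ x ∂μX, ∫⁻ y, ∫⁻ z, u ((x, y), z) ∂μZ ∂μY = 0 := by
        filter_upwards [u0] with x hx
        rw [lintegral_congr_ae hx, lintegral_zero]
      rw [lintegral_congr_ae this, lintegral_zero]
    have tot0' : ∫⁻ z, ∫⁻ xy : X × Y, u (xy, z) ∂μX.prod μY ∂μZ = 0 := by
      rw [← lintegral_prod_symm _ mU.aemeasurable]
      exact tot0
    have mUz : Measurable fun z => ∫⁻ xy : X × Y, u (xy, z) ∂μX.prod μY :=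
      (mU.comp (measurable_snd.prodMk measurable_fst)).lintegral_prod_right'
    have hz0 := (lintegral_eq_zero_iff mUz).mp tot0'
    filter_upwards [hz0] with z hz
    have hz2 : ∫⁻ y, ∫⁻ x, u ((x, y), z) ∂μX ∂μY = 0 := by
      rw [← lintegral_prod_symm (fun xy : X × Y => u (xy, z))
        ((show Measurable fun xy : X × Y => u (xy, z) from
          mU.comp (measurable_id.prodMk measurable_const)).aemeasurable)]
      exact hz
    have mUy : Measurable fun y => ∫⁻ x, u ((x, y), z) ∂μX :=
      (mU.comp (((measurable_snd.prodMk measurable_fst).prodMk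
        measurable_const))).lintegral_prod_right'
    have hy0 := (lintegral_eq_zero_iff mUy).mp hz2
    filter_upwards [hy0] with y hy
    have mUx : Measurable fun x => u ((x, y), z) :=
      mU.comp ((measurable_id.prodMk measurable_const).prodMk measurable_const)
    have hx0 := (lintegral_eq_zero_iff mUx).mp hy
    filter_upwards [hx0] with x hx hkz
    by_contra hne
    have hmem : ((x, y), z) ∈ E := ⟨hkz, hne⟩
    rw [hu] at hx
    simp only [Set.indicator_of_mem hmem, Pi.zero_apply] at hx
    exact one_ne_zero hx
  -- ## Part III : conclusion via the log-sum inequality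
  -- X-side integrand measurability
  have mFX : Measurable fun w : X × Y =>
      pTxy w * Real.log (pTxy w / (pTx w.1 * pSyx w.1 w.2)) :=
    hTm.mul (Real.measurable_log.comp (hTm.div ((mpTx.comp measurable_fst).mul mP)))
  have mGX : Measurable fun w : X × Y =>
      pTxy w * Real.log (pTxy w / (pTx w.1 * pSyx w.1 w.2)) +
        (pTx w.1 * pSyx w.1 w.2 - pTxy w) :=
    mFX.add (((mpTx.comp measurable_fst).mul mP).sub hTm)
  have mFZ : Measurable fun w : Z × Y =>
      pTzy w * Real.log (pTzy w / (pTz w.1 * pSyz w.1 w.2)) :=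
    mpTzy.mul (Real.measurable_log.comp (mpTzy.div ((mpTz.comp measurable_fst).mul mQ)))
  have mGZ : Measurable fun w : Z × Y =>
      pTzy w * Real.log (pTzy w / (pTz w.1 * pSyz w.1 w.2)) +
        (pTz w.1 * pSyz w.1 w.2 - pTzy w) :=
    mFZ.add (((mpTz.comp measurable_fst).mul mQ).sub mpTzy)
  -- pointwise nonnegativity of the corrected integrands
  have GX0 : ∀ x y, 0 ≤ pTxy (x, y) * Real.log (pTxy (x, y) / (pTx x * pSyx x y)) +
      (pTx x * pSyx x y - pTxy (x, y)) := fun x y =>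
    klterm_nonneg (hT0 (x, y)) (mul_pos (hpTx0 x) (pSyx_pos x y)).le
      (fun h => absurd h (mul_pos (hpTx0 x) (pSyx_pos x y)).ne')
  -- the X-slices are integrable thanks to the bounded ratio
  have FXle : ∀ x y, pTxy (x, y) * Real.log (pTxy (x, y) / (pTx x * pSyx x y))
      ≤ pTxy (x, y) * |Real.log (N * pSx x / pTx x)| := by
    intro x y
    rcases eq_or_lt_of_le (hT0 (x, y)) with h0 | hpos
    · rw [← h0]; simp
    · refine mul_le_mul_of_nonneg_left ?_ (hT0 (x, y))
      refine le_trans ?_ (le_abs_self _)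
      have hd1 : 0 < pTxy (x, y) / (pTx x * pSyx x y) :=
        div_pos hpos (mul_pos (hpTx0 x) (pSyx_pos x y))
      have hd2 : 0 < N * pSx x / pTx x :=
        div_pos (mul_pos hN0 (hpSx0 x)) (hpTx0 x)
      refine (Real.log_le_log_iff hd1 hd2).mpr ?_
      rw [div_le_div_iff₀ (mul_pos (hpTx0 x) (pSyx_pos x y)) (hpTx0 x)]
      have h1 : pTxy (x, y) ≤ N * (pSx x * pSyx x y) := by
        rw [pSxyEq x y]; exact hratio (x, y)
      nlinarith [hpTx0 x, pSyx_pos x y, hT0 (x, y)]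
  have intFX : ∀ x, Integrable
      (fun y => pTxy (x, y) * Real.log (pTxy (x, y) / (pTx x * pSyx x y))) μY := by
    intro x
    have hbound : Integrable (fun y =>
        pTxy (x, y) * |Real.log (N * pSx x / pTx x)| + pTx x * pSyx x y) μY :=
      ((iTy x).mul_const _).add ((iPy x).const_mul _)
    refine hbound.mono' (show Measurable fun y =>
        pTxy (x, y) * Real.log (pTxy (x, y) / (pTx x * pSyx x y)) from
        mFX.comp measurable_prodMk_left).aestronglyMeasurable
      (Filter.Eventually.of_forall fun y => ?_)
    rw [Real.norm_eq_abs, abs_le]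
    constructor
    · have h1 := GX0 x y
      have h2 : 0 ≤ pTxy (x, y) * |Real.log (N * pSx x / pTx x)| :=
        mul_nonneg (hT0 (x, y)) (abs_nonneg _)
      nlinarith [hT0 (x, y)]
    · have h2 : 0 ≤ pTx x * pSyx x y := (mul_pos (hpTx0 x) (pSyx_pos x y)).le
      nlinarith [FXle x y]
  have intGX : ∀ x, Integrable (fun y =>
      pTxy (x, y) * Real.log (pTxy (x, y) / (pTx x * pSyx x y)) +
        (pTx x * pSyx x y - pTxy (x, y))) μY := fun x =>
    (intFX x).add (((iPy x).const_mul (pTx x)).sub (iTy x))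
  have GXfin : ∀ x, (∫⁻ y, ENNReal.ofReal
      (pTxy (x, y) * Real.log (pTxy (x, y) / (pTx x * pSyx x y)) +
        (pTx x * pSyx x y - pTxy (x, y))) ∂μY) ≠ ∞ := fun x => by
    rw [← ofReal_integral_eq_lintegral_ofReal (intGX x)
      (Filter.Eventually.of_forall (GX0 x))]
    exact ENNReal.ofReal_ne_top
  have sliceEq : ∀ x, ∫ y, pTxy (x, y) * Real.log (pTxy (x, y) / (pTx x * pSyx x y)) ∂μY
      = (∫⁻ y, ENNReal.ofReal
        (pTxy (x, y) * Real.log (pTxy (x, y) / (pTx x * pSyx x y)) +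
          (pTx x * pSyx x y - pTxy (x, y))) ∂μY).toReal := by
    intro x
    have hHint : Integrable (fun y => pTx x * pSyx x y - pTxy (x, y)) μY :=
      ((iPy x).const_mul (pTx x)).sub (iTy x)
    have hH : ∫ y, (pTx x * pSyx x y - pTxy (x, y)) ∂μY = 0 := by
      rw [integral_sub ((iPy x).const_mul _) (iTy x), integral_const_mul, nSx x, mul_one,
        ← hpTx x, sub_self]
    have e1 : ∫ y, (pTxy (x, y) * Real.log (pTxy (x, y) / (pTx x * pSyx x y)) +
        (pTx x * pSyx x y - pTxy (x, y))) ∂μY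
        = ∫ y, pTxy (x, y) * Real.log (pTxy (x, y) / (pTx x * pSyx x y)) ∂μY := by
      rw [integral_add (intFX x) hHint, hH, add_zero]
    rw [← e1]
    exact integral_eq_lintegral_of_nonneg_ae
      (Filter.Eventually.of_forall fun y => GX0 x y)
      (show Measurable fun y =>
        pTxy (x, y) * Real.log (pTxy (x, y) / (pTx x * pSyx x y)) +
          (pTx x * pSyx x y - pTxy (x, y)) from
        mGX.comp measurable_prodMk_left).aestronglyMeasurable
  have rxEq : ∀ x, pTx x * ∫ y, pTyx x y * Real.log (pTyx x y / pSyx x y) ∂μY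
      = ∫ y, pTxy (x, y) * Real.log (pTxy (x, y) / (pTx x * pSyx x y)) ∂μY := by
    intro x
    rw [← integral_const_mul]
    refine integral_congr_ae (Filter.Eventually.of_forall fun y => ?_)
    beta_reduce
    rw [hpTyx x y, div_div, ← mul_assoc,
      mul_comm (pTx x) (pTxy (x, y) / pTx x), div_mul_cancel₀ _ (hpTx0 x).ne']
  have hrfun : (fun x => pTx x * ∫ y, pTyx x y * Real.log (pTyx x y / pSyx x y) ∂μY)
      = fun x => ∫ y, pTxy (x, y) * Real.log (pTxy (x, y) / (pTx x * pSyx x y)) ∂μY :=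
    funext rxEq
  have hintx' : Integrable
      (fun x => ∫ y, pTxy (x, y) * Real.log (pTxy (x, y) / (pTx x * pSyx x y)) ∂μY) μX :=
    hrfun ▸ hintx
  have hr0 : ∀ x, 0 ≤ ∫ y, pTxy (x, y) * Real.log (pTxy (x, y) / (pTx x * pSyx x y)) ∂μY :=
    fun x => by rw [sliceEq x]; exact ENNReal.toReal_nonneg
  have hOm : ∫⁻ x, ∫⁻ y, ENNReal.ofReal
      (pTxy (x, y) * Real.log (pTxy (x, y) / (pTx x * pSyx x y)) +
        (pTx x * pSyx x y - pTxy (x, y))) ∂μY ∂μX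
      = ENNReal.ofReal (∫ x, ∫ y,
          pTxy (x, y) * Real.log (pTxy (x, y) / (pTx x * pSyx x y)) ∂μY ∂μX) := by
    rw [ofReal_integral_eq_lintegral_ofReal hintx' (Filter.Eventually.of_forall hr0)]
    refine lintegral_congr fun x => ?_
    rw [sliceEq x, ENNReal.ofReal_toReal (GXfin x)]
  have hOmfin : (∫⁻ x, ∫⁻ y, ENNReal.ofReal
      (pTxy (x, y) * Real.log (pTxy (x, y) / (pTx x * pSyx x y)) +
        (pTx x * pSyx x y - pTxy (x, y))) ∂μY ∂μX) ≠ ∞ := by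
    rw [hOm]; exact ENNReal.ofReal_ne_top
  have hRHS : ∫ x, pTx x * ∫ y, pTyx x y * Real.log (pTyx x y / pSyx x y) ∂μY ∂μX
      = (∫⁻ x, ∫⁻ y, ENNReal.ofReal
        (pTxy (x, y) * Real.log (pTxy (x, y) / (pTx x * pSyx x y)) +
          (pTx x * pSyx x y - pTxy (x, y))) ∂μY ∂μX).toReal := by
    rw [hrfun, hOm, ENNReal.toReal_ofReal (integral_nonneg hr0)]
  -- Z-side algebra
  have lhsEqz : ∀ z, pTz z * ∫ y, pTyz z y * Real.log (pTyz z y / pSyz z y) ∂μY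
      = ∫ y, pTzy (z, y) * Real.log (pTzy (z, y) / (pTz z * pSyz z y)) ∂μY := by
    intro z
    rw [← integral_const_mul]
    refine integral_congr_ae (Filter.Eventually.of_forall fun y => ?_)
    beta_reduce
    rw [hpTyz z y, div_div, ← mul_assoc,
      mul_comm (pTz z) (pTzy (z, y) / pTz z), div_mul_cancel₀ _ (hpTz0 z).ne']
  have hTSzy := Measure.ae_ae_of_ae_prod hTzyle
  have claimZ : ∀ᵐ z ∂μZ, ENNReal.ofReal
      (∫ y, pTzy (z, y) * Real.log (pTzy (z, y) / (pTz z * pSyz z y)) ∂μY)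
      ≤ ∫⁻ y, ENNReal.ofReal
          (pTzy (z, y) * Real.log (pTzy (z, y) / (pTz z * pSyz z y)) +
            (pTz z * pSyz z y - pTzy (z, y))) ∂μY := by
    filter_upwards [hTSzy] with z hz
    have hz0' : ∀ᵐ y ∂μY, 0 ≤ pTzy (z, y) * Real.log (pTzy (z, y) / (pTz z * pSyz z y)) +
        (pTz z * pSyz z y - pTzy (z, y)) := by
      filter_upwards [hz] with y hy
      have himp : pTz z * pSyz z y = 0 → pTzy (z, y) = 0 := by
        intro h
        have hq : pSyz z y = 0 := by
          rcases mul_eq_zero.mp h with h' | h'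
          · exact absurd h' (hpTz0 z).ne'
          · exact h'
        have h2 : pSzy (z, y) = 0 := by rw [← pSzyEq z y, hq, mul_zero]
        have h3 : pTzy (z, y) ≤ 0 := by rw [h2] at hy; simpa using hy
        exact le_antisymm h3 (pTzy0 (z, y))
      exact klterm_nonneg (pTzy0 (z, y)) (mul_nonneg (hpTz0 z).le (pSyz0 z y)) himp
    by_cases hintF : Integrable
        (fun y => pTzy (z, y) * Real.log (pTzy (z, y) / (pTz z * pSyz z y))) μY
    · have hHz : Integrable (fun y => pTz z * pSyz z y - pTzy (z, y)) μY :=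
        ((iQy z).const_mul (pTz z)).sub (iTzy z)
      have hHz0 : ∫ y, (pTz z * pSyz z y - pTzy (z, y)) ∂μY = 0 := by
        rw [integral_sub ((iQy z).const_mul _) (iTzy z), integral_const_mul, nSz z, mul_one,
          ← hpTz z, sub_self]
      have e1 : ∫ y, pTzy (z, y) * Real.log (pTzy (z, y) / (pTz z * pSyz z y)) ∂μY
          = ∫ y, (pTzy (z, y) * Real.log (pTzy (z, y) / (pTz z * pSyz z y)) +
              (pTz z * pSyz z y - pTzy (z, y))) ∂μY := by
        rw [integral_add hintF hHz, hHz0, add_zero]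
      have e2 : ∫ y, (pTzy (z, y) * Real.log (pTzy (z, y) / (pTz z * pSyz z y)) +
          (pTz z * pSyz z y - pTzy (z, y))) ∂μY
          = (∫⁻ y, ENNReal.ofReal
              (pTzy (z, y) * Real.log (pTzy (z, y) / (pTz z * pSyz z y)) +
                (pTz z * pSyz z y - pTzy (z, y))) ∂μY).toReal :=
        integral_eq_lintegral_of_nonneg_ae hz0'
          (show Measurable fun y =>
            pTzy (z, y) * Real.log (pTzy (z, y) / (pTz z * pSyz z y)) +
              (pTz z * pSyz z y - pTzy (z, y)) from
            mGZ.comp measurable_prodMk_left).aestronglyMeasurable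
      rw [e1, e2]
      exact ENNReal.ofReal_toReal_le
    · rw [integral_undef hintF]
      simp
  -- the key comparison of the two double lintegrals
  have keyLe : ∫⁻ z, ∫⁻ y, ENNReal.ofReal
      (pTzy (z, y) * Real.log (pTzy (z, y) / (pTz z * pSyz z y)) +
        (pTz z * pSyz z y - pTzy (z, y))) ∂μY ∂μZ
      ≤ ∫⁻ x, ∫⁻ y, ENNReal.ofReal
          (pTxy (x, y) * Real.log (pTxy (x, y) / (pTx x * pSyx x y)) +
            (pTx x * pSyx x y - pTxy (x, y))) ∂μY ∂μX := by
    have perZY : ∀ᵐ z ∂μZ, ∀ᵐ y ∂μY, ENNReal.ofReal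
        (pTzy (z, y) * Real.log (pTzy (z, y) / (pTz z * pSyz z y)) +
          (pTz z * pSyz z y - pTzy (z, y)))
        ≤ ∫⁻ x, ENNReal.ofReal (k x z) * ENNReal.ofReal
            (pTxy (x, y) * Real.log (pTxy (x, y) / (pTx x * pSyx x y)) +
              (pTx x * pSyx x y - pTxy (x, y))) ∂μX := by
      filter_upwards [fT2, Measure.ae_ae_of_ae_prod fT1, KeyS'] with z hz2 hz1 hzK
      filter_upwards [hz1, hzK] with y hy1 hyK
      have hbeq : ∀ᵐ x ∂μX, pTx x * k x z * pSyz z y = pTx x * pSyx x y * k x z := by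
        filter_upwards [hyK] with x hxK
        rcases eq_or_ne (k x z) 0 with h0 | h0
        · rw [h0]; ring
        · rw [hxK h0]; ring
      have hbint : Integrable (fun x => pTx x * pSyx x y * k x z) μX :=
        ((hz2.1).mul_const (pSyz z y)).congr hbeq
      have hbval : ∫ x, pTx x * pSyx x y * k x z ∂μX = pTz z * pSyz z y := by
        rw [← integral_congr_ae hbeq, integral_mul_const, ← hz2.2.1]
      have hls := logsum μX (fun x => pTxy (x, y) * k x z)
        (fun x => pTx x * pSyx x y * k x z)
        ((hTm.comp (measurable_id.prodMk measurable_const)).mul (mkz z))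
        (((mpTx.mul (mP.comp (measurable_id.prodMk measurable_const)))).mul (mkz z))
        (fun x => mul_nonneg (hT0 _) (hk0 _ _))
        (fun x => mul_nonneg (mul_nonneg (hpTx0 x).le (pSyx_pos x y).le) (hk0 x z))
        hy1.1 hbint
        (fun x h => by
          rcases mul_eq_zero.mp h with h' | h'
          · rcases mul_eq_zero.mp h' with h'' | h''
            · exact absurd h'' (hpTx0 x).ne'
            · exact absurd h'' (pSyx_pos x y).ne'
          · beta_reduce; rw [h', mul_zero])
      beta_reduce at hls
      rw [← hpTzy z y, hbval] at hls
      refine le_trans hls (le_of_eq ?_)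
      refine lintegral_congr fun x => ?_
      beta_reduce
      rcases eq_or_ne (k x z) 0 with h0 | h0
      · simp [h0]
      · have hab' : pTxy (x, y) * k x z / (pTx x * pSyx x y * k x z)
            = pTxy (x, y) / (pTx x * pSyx x y) := mul_div_mul_right _ _ h0
        rw [hab', ← ENNReal.ofReal_mul (hk0 x z)]
        congr 1
        ring
    refine le_trans (lintegral_mono_ae (perZY.mono fun z h => lintegral_mono_ae h))
      (le_of_eq ?_)
    have mtrip : Measurable fun q : (Z × Y) × X =>
        ENNReal.ofReal (k q.2 q.1.1) * ENNReal.ofReal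
          (pTxy (q.2, q.1.2) * Real.log (pTxy (q.2, q.1.2) /
            (pTx q.2 * pSyx q.2 q.1.2)) +
            (pTx q.2 * pSyx q.2 q.1.2 - pTxy (q.2, q.1.2))) :=
      ((hkm.comp (measurable_snd.prodMk measurable_fst.fst)).ennreal_ofReal).mul
        ((mGX.comp (measurable_snd.prodMk measurable_fst.snd)).ennreal_ofReal)
    calc ∫⁻ z, ∫⁻ y, ∫⁻ x, ENNReal.ofReal (k x z) * ENNReal.ofReal
            (pTxy (x, y) * Real.log (pTxy (x, y) / (pTx x * pSyx x y)) +
              (pTx x * pSyx x y - pTxy (x, y))) ∂μX ∂μY ∂μZ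
        = ∫⁻ w : Z × Y, ∫⁻ x, ENNReal.ofReal (k x w.1) * ENNReal.ofReal
            (pTxy (x, w.2) * Real.log (pTxy (x, w.2) / (pTx x * pSyx x w.2)) +
              (pTx x * pSyx x w.2 - pTxy (x, w.2))) ∂μX ∂μZ.prod μY :=
          (lintegral_prod _ (mtrip.lintegral_prod_right').aemeasurable).symm
      _ = ∫⁻ x, ∫⁻ w : Z × Y, ENNReal.ofReal (k x w.1) * ENNReal.ofReal
            (pTxy (x, w.2) * Real.log (pTxy (x, w.2) / (pTx x * pSyx x w.2)) +
              (pTx x * pSyx x w.2 - pTxy (x, w.2))) ∂μZ.prod μY ∂μX :=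
          lintegral_lintegral_swap mtrip.aemeasurable
      _ = ∫⁻ x, ∫⁻ y, ENNReal.ofReal
            (pTxy (x, y) * Real.log (pTxy (x, y) / (pTx x * pSyx x y)) +
              (pTx x * pSyx x y - pTxy (x, y))) ∂μY ∂μX := by
          refine lintegral_congr fun x => ?_
          have m1 : Measurable fun w : Z × Y => ENNReal.ofReal (k x w.1) * ENNReal.ofReal
              (pTxy (x, w.2) * Real.log (pTxy (x, w.2) / (pTx x * pSyx x w.2)) +
                (pTx x * pSyx x w.2 - pTxy (x, w.2))) :=
            (((mkx x).comp measurable_fst).ennreal_ofReal).mul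
              ((mGX.comp (measurable_const.prodMk measurable_snd)).ennreal_ofReal)
          rw [lintegral_prod _ m1.aemeasurable]
          have inner1 : ∀ z, ∫⁻ y, ENNReal.ofReal (k x z) * ENNReal.ofReal
              (pTxy (x, y) * Real.log (pTxy (x, y) / (pTx x * pSyx x y)) +
                (pTx x * pSyx x y - pTxy (x, y))) ∂μY
              = ENNReal.ofReal (k x z) * ∫⁻ y, ENNReal.ofReal
                  (pTxy (x, y) * Real.log (pTxy (x, y) / (pTx x * pSyx x y)) +
                    (pTx x * pSyx x y - pTxy (x, y))) ∂μY := fun z =>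
            lintegral_const_mul _ (show Measurable fun y => ENNReal.ofReal
              (pTxy (x, y) * Real.log (pTxy (x, y) / (pTx x * pSyx x y)) +
                (pTx x * pSyx x y - pTxy (x, y))) from
              (mGX.comp measurable_prodMk_left).ennreal_ofReal)
          rw [lintegral_congr inner1, lintegral_mul_const _ ((mkx x).ennreal_ofReal), lk x,
            one_mul]
  -- final assembly
  have hLHSf : (fun z => pTz z * ∫ y, pTyz z y * Real.log (pTyz z y / pSyz z y) ∂μY)
      = fun z => ∫ y, pTzy (z, y) * Real.log (pTzy (z, y) / (pTz z * pSyz z y)) ∂μY :=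
    funext lhsEqz
  have hintz' : Integrable
      (fun z => ∫ y, pTzy (z, y) * Real.log (pTzy (z, y) / (pTz z * pSyz z y)) ∂μY) μZ :=
    hLHSf ▸ hintz
  rw [hRHS]
  calc ∫ z, pTz z * ∫ y, pTyz z y * Real.log (pTyz z y / pSyz z y) ∂μY ∂μZ
      = ∫ z, ∫ y, pTzy (z, y) * Real.log (pTzy (z, y) / (pTz z * pSyz z y)) ∂μY ∂μZ := by
        rw [hLHSf]
    _ ≤ (∫⁻ z, ENNReal.ofReal
          (∫ y, pTzy (z, y) * Real.log (pTzy (z, y) / (pTz z * pSyz z y)) ∂μY) ∂μZ).toReal :=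
        integral_le_toReal_lintegral μZ _ hintz'
    _ ≤ (∫⁻ x, ∫⁻ y, ENNReal.ofReal
          (pTxy (x, y) * Real.log (pTxy (x, y) / (pTx x * pSyx x y)) +
            (pTx x * pSyx x y - pTxy (x, y))) ∂μY ∂μX).toReal :=
        ENNReal.toReal_mono hOmfin (le_trans (lintegral_mono_ae claimZ) keyLe)
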